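/- Let K be a field, V a finite-dimensional K-vector space, t ≥ 1 an integer, and let V₁, …, V_t be subspaces of V forming an internal direct sum decomposition V = V₁ ⊕ … ⊕ V_t with dim V_i = m for every i. Let g be a linear automorphism of V such that g(V_i) = V_{i+1} for 1 ≤ i < t and g(V_t) = V₁. Then g^t maps V₁ to itself, and if g′ denotes the restriction of g^t to V₁, then det(g) = (−1)^(m·(t−1)) · det(g′). -/

import Mathlib

open Matrix
open Fin.NatCast

theorem det_of_cyclic_permutation {K V : Type*} [Field K] [AddCommGroup V] [Module K V]
    [FiniteDimensional K V] (t : ℕ) [NeZero t] (m : ℕ)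
    (W : Fin t → Submodule K V) (hInt : DirectSum.IsInternal W)
    (hdim : ∀ i, Module.finrank K (W i) = m)
    (g : V ≃ₗ[K] V)
    (hcyc : ∀ i : Fin t, (W i).map (g : V →ₗ[K] V) = W (i + 1)) :
    (W 0).map ((g ^ t : V ≃ₗ[K] V) : V →ₗ[K] V) = W 0 ∧
    ∃ h : ∀ x ∈ W 0, ((g ^ t : V ≃ₗ[K] V) : V →ₗ[K] V) x ∈ W 0,
      LinearMap.det (g : V →ₗ[K] V) =
        (-1 : K) ^ (m * (t - 1)) *
          LinearMap.det (((g ^ t : V ≃ₗ[K] V) : V →ₗ[K] V).restrict h) := by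
  have hpow : ∀ k : ℕ, (W 0).map ((g ^ k : V ≃ₗ[K] V) : V →ₗ[K] V) = W ((k : Fin t)) := by
    intro k
    induction k with
    | zero => simp
    | succ k ih =>
      have hco : ((g ^ (k+1) : V ≃ₗ[K] V) : V →ₗ[K] V)
          = (g : V →ₗ[K] V) ∘ₗ ((g ^ k : V ≃ₗ[K] V) : V →ₗ[K] V) := by
        rw [pow_succ']; rfl
      rw [hco, Submodule.map_comp, ih, hcyc]
      norm_cast
  have part1 : (W 0).map ((g ^ t : V ≃ₗ[K] V) : V →ₗ[K] V) = W 0 := by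
    simpa using hpow t
  refine ⟨part1, ?_⟩
  have h : ∀ x ∈ W 0, ((g ^ t : V ≃ₗ[K] V) : V →ₗ[K] V) x ∈ W 0 := by
    intro x hx
    rw [← part1]; exact Submodule.mem_map_of_mem hx
  refine ⟨h, ?_⟩
  classical
  obtain ⟨n, rfl⟩ : ∃ n, t = n + 1 :=
    ⟨t - 1, (Nat.succ_pred_eq_of_pos (Nat.pos_of_ne_zero (NeZero.ne t))).symm⟩
  -- basic facts about Fin (n+1)
  have hl0 : (Fin.last n) + 1 = 0 := by
    rw [← Fin.neg_last n]; exact add_neg_cancel _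
  have hlast : ∀ j : Fin (n+1), j + 1 = 0 ↔ j = Fin.last n :=
    fun j => ⟨fun hj => add_right_cancel (hj.trans hl0.symm), fun hj => hj ▸ hl0⟩
  -- bases
  let b : Module.Basis (Fin m) K (W 0) := Module.finBasisOfFinrankEq K (W 0) (hdim 0)
  have hmap : ∀ j : Fin (n+1), (W 0).map ((g ^ (j:ℕ) : V ≃ₗ[K] V) : V →ₗ[K] V) = W j := by
    intro j; rw [hpow]; congr 1; exact Fin.cast_val_eq_self j
  let eqv : ∀ j : Fin (n+1), (W 0) ≃ₗ[K] (W j) := fun j =>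
    ((g ^ (j:ℕ)).submoduleMap (W 0)).trans (LinearEquiv.ofEq _ _ (hmap j))
  have heqv : ∀ (j) (x : W 0), (eqv j x : V) = (g ^ (j:ℕ)) x := fun j x => rfl
  let bW : ∀ j, Module.Basis (Fin m) K (W j) := fun j => b.map (eqv j)
  let c : Module.Basis ((_ : Fin (n+1)) × Fin m) K V := hInt.collectedBasis bW
  have hc : ∀ (j : Fin (n+1)) (i : Fin m), c ⟨j, i⟩ = (g ^ (j:ℕ)) (b i) := by
    intro j i
    show (hInt.collectedBasis bW) ⟨j, i⟩ = _
    rw [hInt.collectedBasis_coe]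
    exact heqv j (b i)
  set g' := ((g ^ (n+1) : V ≃ₗ[K] V) : V →ₗ[K] V).restrict h with hg'
  set A := LinearMap.toMatrix b b g' with hA
  set B : Fin (n+1) → Matrix (Fin m) (Fin m) K :=
    fun j => if j + 1 = 0 then A else 1 with hB
  -- the key entrywise computation
  have key : ∀ p q : (_ : Fin (n+1)) × Fin m,
      LinearMap.toMatrix c c (g : V →ₗ[K] V) p q
        = blockDiagonal B (p.2, p.1 - 1) (q.2, q.1) := by
    rintro ⟨j', i'⟩ ⟨j, i⟩
    rw [LinearMap.toMatrix_apply, Matrix.blockDiagonal_apply]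
    dsimp only
    have hRHS : (if j' - 1 = j then B (j' - 1) i' i else 0)
        = (if j' = j + 1 then B j i' i else 0) := by
      rcases eq_or_ne (j' - 1) j with he | he
      · rw [if_pos he, if_pos (sub_eq_iff_eq_add.1 he), he]
      · rw [if_neg he, if_neg (fun hh => he (sub_eq_iff_eq_add.2 hh))]
    rw [hRHS, hc j i]
    have hg : (g : V →ₗ[K] V) ((g ^ (j:ℕ)) ((b i : W 0) : V))
        = (g ^ ((j:ℕ)+1)) ((b i : W 0) : V) := by
      rw [pow_succ']; rfl
    rw [hg]
    rcases eq_or_lt_of_le (Nat.succ_le_of_lt j.is_lt) with hj | hj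
    · -- j = last n
      have hjn : (j:ℕ) + 1 = n + 1 := hj
      have hjlast : j = Fin.last n := Fin.ext (by simpa using hj)
      have hj0 : j + 1 = 0 := (hlast j).2 hjlast
      rw [hjn, hj0]
      have mem0 : (g ^ (n+1)) ((b i : W 0) : V) ∈ W 0 := h _ (b i).2
      by_cases hj' : j' = 0
      · subst hj'
        rw [if_pos rfl, hInt.collectedBasis_repr_of_mem bW mem0]
        have hx : (⟨(g ^ (n+1)) ((b i : W 0) : V), mem0⟩ : W 0) = g' (b i) := by
          apply Subtype.ext
          simp [hg', LinearMap.restrict_apply]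
        rw [hx]
        have hmapr : (bW 0).repr (g' (b i)) i' = b.repr ((eqv 0).symm (g' (b i))) i' := rfl
        have h0 : (eqv 0).symm (g' (b i)) = g' (b i) := by
          apply Subtype.ext
          show ((((g ^ ((0 : Fin (n+1)):ℕ)).submoduleMap (W 0)).trans
            (LinearEquiv.ofEq _ _ (hmap 0))).symm (g' (b i)) : V) = _
          rw [LinearEquiv.symm_trans_apply, LinearEquiv.submoduleMap_symm_apply,
            show ((g ^ ((0 : Fin (n+1)) : ℕ)).symm) = LinearEquiv.refl K V by
              rw [Fin.val_zero, pow_zero]; rfl]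
          rfl
        rw [hmapr, h0, hB]
        simp only [if_pos hj0]
        rw [hA, LinearMap.toMatrix_apply]
      · rw [if_neg hj']
        exact hInt.collectedBasis_repr_of_mem_ne bW (Ne.symm hj') mem0
    · -- no wraparound
      have hjlt : j < Fin.last n := by
        rw [Fin.lt_iff_val_lt_val, Fin.val_last]; omega
      have hval : ((j + 1 : Fin (n+1)) : ℕ) = (j:ℕ) + 1 := Fin.val_add_one_of_lt hjlt
      have hne : j + 1 ≠ 0 := by
        intro hh
        rw [hh] at hval
        simp at hval
      rw [← hval, ← hc (j+1) i, Module.Basis.repr_self, Finsupp.single_apply, hB]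
      simp only [if_neg hne]
      rcases eq_or_ne j' (j + 1) with h1 | h1
      · subst h1
        simp [Sigma.ext_iff, Matrix.one_apply, eq_comm]
      · rw [if_neg h1, if_neg]
        intro hh
        exact h1 (congrArg Sigma.fst hh).symm
  -- the permutation and reindexing
  let σe : ((_ : Fin (n+1)) × Fin m) ≃ (Fin m × Fin (n+1)) :=
    (Equiv.sigmaEquivProd (Fin (n+1)) (Fin m)).trans (Equiv.prodComm _ _)
  let ρ : Equiv.Perm (Fin m × Fin (n+1)) :=
    Equiv.prodCongrRight fun _ => (finRotate (n+1))⁻¹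
  have hrot : ∀ x : Fin (n+1), (finRotate (n+1))⁻¹ x = x - 1 := by
    intro x
    rw [Equiv.Perm.inv_def, Equiv.symm_apply_eq, finRotate_succ_apply, sub_add_cancel]
  have hρ : ∀ x : Fin m × Fin (n+1), ρ x = (x.1, x.2 - 1) := by
    intro x
    simp [ρ, Equiv.prodCongrRight, hrot]
  have hM : LinearMap.toMatrix c c (g : V →ₗ[K] V)
      = ((blockDiagonal B).submatrix ρ id).submatrix σe σe := by
    ext p q
    simp only [Matrix.submatrix_apply, id_eq, hρ]
    exact key p q
  have hsign : Equiv.Perm.sign ρ = (-1 : ℤˣ) ^ (m * n) := by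
    rw [Equiv.Perm.sign_prodCongrRight]
    simp only [map_inv, sign_finRotate]
    rw [Finset.prod_const, Finset.card_univ, Fintype.card_fin]
    rw [inv_pow, ← pow_mul, mul_comm]
    norm_num
  have hprod : ∏ j, det (B j) = det A := by
    rw [Finset.prod_eq_single (Fin.last n)]
    · rw [hB]; simp only [if_pos hl0]
    · intro j _ hj
      rw [hB]; simp only [if_neg (fun hh => hj ((hlast j).1 hh))]
      exact Matrix.det_one
    · simp
  calc LinearMap.det (g : V →ₗ[K] V)
      = det (LinearMap.toMatrix c c (g : V →ₗ[K] V)) := (LinearMap.det_toMatrix c _).symm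
    _ = det ((blockDiagonal B).submatrix ρ id) := by rw [hM, det_submatrix_equiv_self]
    _ = Equiv.Perm.sign ρ * det (blockDiagonal B) := det_permute ρ _
    _ = (-1 : K) ^ (m * (n + 1 - 1)) * LinearMap.det g' := by
        rw [hsign, det_blockDiagonal, hprod, hA, LinearMap.det_toMatrix]
        simp [Units.val_pow_eq_pow_val]
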